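/- Let F be a field, let L be a graded abelian group freely generated in each weight n ≥ 2 by symbols [x]_n with x ∈ F \ {0,1}, together with weight-1 part F*, and define δ[x]_n = [x]_{n-1} ∧ [x]_0 for n > 2 and δ[x]_2 = x ∧ (1−x) ∈ ∧²(F*), where [x]_0 denotes x ∈ F* and [x]_1 denotes (1−x)^{−1} ∈ F*. Then the composition δ∘δ (extended as a derivation to ∧²) is zero, i.e. the depth-1 part of the symbolic coalgebra satisfies δ² = 0. -/
import Mathlib


/- STATEMENT 1: the depth-1 part of the symbolic coalgebra satisfies δ² = 0.
The module `PolyMod F` has weight-1 part `F*` (written additively) and is freely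
generated in each weight `n ≥ 2` by symbols `[x]ₙ` with `x ∈ F \ {0,1}`.
`[x]₀` denotes `x ∈ F*`.  The cobracket sends a generator `[x]ₙ` to the wedge
`[x]_{n-1} ∧ [x]₀` for `n > 2` and `[x]₂` to `x ∧ (1-x)` (note
`[x]₁ ∧ [x]₀ = (1-x)⁻¹ ∧ x = x ∧ (1-x)`); wedges are encoded as products
`ι a * ι b` in the exterior algebra over ℤ.  The extension of δ to ∧² is the
derivation `a ∧ b ↦ δa ∧ b - a ∧ δb`, and δ vanishes in weight 1.  The theorem
asserts that this composite vanishes on (the cobracket of) every generator. -/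

noncomputable section

variable (F : Type*) [Field F]

/-- weight-1 part `F*` together with free generators `[x]ₙ`, `n ≥ 2`, `x ≠ 0,1`. -/
abbrev PolyMod : Type _ :=
  Additive Fˣ × FreeAbelianGroup {p : ℕ × F // 2 ≤ p.1 ∧ p.2 ≠ 0 ∧ p.2 ≠ 1}

variable {F}

/-- the weight-1 element `[x]₀ = x ∈ F*`. -/
def wone (x : F) (hx : x ≠ 0) : PolyMod F :=
  (Additive.ofMul (Units.mk0 x hx), 0)

/-- the free generator `[x]ₙ`, `n ≥ 2`. -/
def sym (n : ℕ) (x : F) (h : 2 ≤ n ∧ x ≠ 0 ∧ x ≠ 1) : PolyMod F :=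
  (0, FreeAbelianGroup.of ⟨(n, x), h⟩)

/-- the pair `(a, b)` with `δ[x]ₙ = a ∧ b`: for `n = 2` it is `(x, 1-x)`
(i.e. `δ[x]₂ = x ∧ (1-x)`), and for `n > 2` it is `([x]_{n-1}, [x]₀)`. -/
def dPair (n : ℕ) (x : F) (h : 2 ≤ n ∧ x ≠ 0 ∧ x ≠ 1) : PolyMod F × PolyMod F :=
  if hn : n = 2 then
    (wone x h.2.1, wone (1 - x) (sub_ne_zero.mpr (Ne.symm h.2.2)))
  else
    (sym (n - 1) x ⟨by omega, h.2⟩, wone x h.2.1)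

/-- The cobracket `δ : PolyMod F → ∧²`, zero on the weight-1 part and given by
`dPair` on the free generators of weight `≥ 2`. -/
def dFull : PolyMod F →+ ExteriorAlgebra ℤ (PolyMod F) :=
  (FreeAbelianGroup.lift fun p =>
      ExteriorAlgebra.ι ℤ (dPair p.1.1 p.1.2 p.2).1 *
        ExteriorAlgebra.ι ℤ (dPair p.1.1 p.1.2 p.2).2).comp
    (AddMonoidHom.snd (Additive Fˣ) _)

/-- δ² = 0 in depth 1: applying the derivation extension
`a ∧ b ↦ δa ∧ b − a ∧ δb` of δ to `δ[x]ₙ` gives zero, for every generator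
`[x]ₙ` with `n ≥ 2`, `x ∈ F \ {0,1}`. -/
theorem depth_one_cobracket_squared_zero (n : ℕ) (x : F)
    (h : 2 ≤ n ∧ x ≠ 0 ∧ x ≠ 1) :
    dFull (dPair n x h).1 * ExteriorAlgebra.ι ℤ (dPair n x h).2 -
      ExteriorAlgebra.ι ℤ (dPair n x h).1 * dFull (dPair n x h).2 = 0 := by
  have hwone : ∀ (y : F) (hy : y ≠ 0), dFull (wone y hy) = 0 := by
    intro y hy
    simp [dFull, wone]
  have hsym : ∀ (m : ℕ) (y : F) (hm : 2 ≤ m ∧ y ≠ 0 ∧ y ≠ 1),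
      dFull (sym m y hm) =
        ExteriorAlgebra.ι ℤ (dPair m y hm).1 * ExteriorAlgebra.ι ℤ (dPair m y hm).2 := by
    intro m y hm
    simp [dFull, sym]
  by_cases hn : n = 2
  · subst hn
    simp [dPair, hwone]
  · rw [show dPair n x h = (sym (n - 1) x ⟨by omega, h.2⟩, wone x h.2.1) from dif_neg hn]
    simp only [hwone, mul_zero, sub_zero, hsym]
    by_cases hn1 : n - 1 = 2
    · rw [show dPair (n-1) x ⟨by omega, h.2⟩ =
        (wone x h.2.1, wone (1 - x) (sub_ne_zero.mpr (Ne.symm h.2.2))) from dif_pos hn1]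
      have := ExteriorAlgebra.ι_add_mul_swap (R := ℤ)
        (wone x h.2.1) (wone (1 - x) (sub_ne_zero.mpr (Ne.symm h.2.2)))
      have h2 : ExteriorAlgebra.ι ℤ (wone x h.2.1) *
          ExteriorAlgebra.ι ℤ (wone (1 - x) (sub_ne_zero.mpr (Ne.symm h.2.2))) =
          - (ExteriorAlgebra.ι ℤ (wone (1 - x) (sub_ne_zero.mpr (Ne.symm h.2.2))) *
            ExteriorAlgebra.ι ℤ (wone x h.2.1)) := eq_neg_of_add_eq_zero_left this
      rw [h2, neg_mul, mul_assoc, ExteriorAlgebra.ι_sq_zero, mul_zero, neg_zero]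
    · rw [show dPair (n-1) x ⟨by omega, h.2⟩ =
        (sym (n - 1 - 1) x ⟨by omega, h.2⟩, wone x h.2.1) from dif_neg hn1]
      rw [mul_assoc, ExteriorAlgebra.ι_sq_zero, mul_zero]

end
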